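/- arXiv:math/0402041 — 2 statements merged into one kernel-verified Lean document; each statement's English description precedes it below -/
import Mathlib

section
/- Let $n \ge 1$, let $A$ be an $n\times n$ Hermitian matrix over $\mathbb{C}$, let $W$ be an $n\times n$ positive definite Hermitian matrix, let $v \in \mathbb{C}^n$ and $c \ge 0$, and set $W_0 = W + c\,vv^*$. Then for every $j$ with $1 \le j \le n-1$ one has $\gamma_j(A;W_0) \le \gamma_{j+1}(A;W)$; i.e., passing from the metric $W$ to the rank-one enlargement $W_0$ pushes each relative eigenvalue below the next eigenvalue for the original metric. -/
open Matrix
open scoped ComplexOrder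

/-- The Rayleigh quotient `u*Au / u*Wu` of a pair of matrices at a vector `u`. -/
noncomputable def rayleigh {n : ℕ} (A W : Matrix (Fin n) (Fin n) ℂ) (u : Fin n → ℂ) : ℝ :=
  ((star u) ⬝ᵥ (A *ᵥ u)).re / ((star u) ⬝ᵥ (W *ᵥ u)).re

/-- The `j`-th eigenvalue (in increasing order, `1 ≤ j ≤ n`) of the Hermitian matrix `A`
relative to the positive definite Hermitian matrix `W`, via the Courant–Fischer formula
`γ_j(A;W) = min_{dim F = j} max_{u ∈ F \ {0}} (u*Au)/(u*Wu)`. -/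
noncomputable def relEig {n : ℕ} (A W : Matrix (Fin n) (Fin n) ℂ) (j : ℕ) : ℝ :=
  sInf { r : ℝ | ∃ F : Submodule ℂ (Fin n → ℂ), Module.finrank ℂ F = j ∧
      r = sSup { s : ℝ | ∃ u : Fin n → ℂ, u ∈ F ∧ u ≠ 0 ∧ s = rayleigh A W u } }

noncomputable def qf {n : ℕ} (M : Matrix (Fin n) (Fin n) ℂ) (u : Fin n → ℂ) : ℝ :=
  ((star u) ⬝ᵥ (M *ᵥ u)).re

lemma qf_cont {n : ℕ} (M : Matrix (Fin n) (Fin n) ℂ) : Continuous (qf M) := by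
  unfold qf
  simp only [dotProduct, mulVec, Pi.star_apply]
  fun_prop

lemma qf_smul {n : ℕ} (M : Matrix (Fin n) (Fin n) ℂ) (r : ℝ) (u : Fin n → ℂ) :
    qf M ((r:ℂ) • u) = r^2 * qf M u := by
  unfold qf
  rw [star_smul, mulVec_smul, smul_dotProduct, dotProduct_smul]
  simp [Complex.ofReal_pow]
  ring

lemma qf_bound {n : ℕ} (hn : 1 ≤ n) (M : Matrix (Fin n) (Fin n) ℂ) :
    ∃ C : ℝ, ∀ u : Fin n → ℂ, |qf M u| ≤ C * ‖u‖^2 := by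
  have : Nontrivial (Fin n → ℂ) := by
    have : NeZero n := ⟨by omega⟩
    infer_instance
  have hcomp : IsCompact (Metric.sphere (0 : Fin n → ℂ) 1) := isCompact_sphere 0 1
  obtain ⟨C, hC⟩ := hcomp.exists_bound_of_continuousOn
    ((qf_cont M).continuousOn (s := Metric.sphere 0 1))
  refine ⟨C, fun u => ?_⟩
  rcases eq_or_ne u 0 with rfl | hu
  · have h0 : qf M 0 = 0 := by simp [qf]
    have : (0:ℝ) ≤ C := by
      obtain ⟨w, hw⟩ := NormedSpace.sphere_nonempty (E := Fin n → ℂ) (x := (0 : Fin n → ℂ))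
        (r := 1) |>.mpr (by norm_num)
      exact le_trans (abs_nonneg _) (hC w hw)
    simp [h0, this]
  · have hnu : ‖u‖ ≠ 0 := norm_ne_zero_iff.mpr hu
    set w : Fin n → ℂ := ((‖u‖⁻¹ : ℝ) : ℂ) • u with hw
    have hws : w ∈ Metric.sphere (0 : Fin n → ℂ) 1 := by
      simp [hw, norm_smul, inv_mul_cancel₀ hnu]
    have huw : u = ((‖u‖ : ℝ) : ℂ) • w := by
      rw [hw, smul_smul, ← Complex.ofReal_mul, mul_inv_cancel₀ hnu]
      simp
    have hb := hC w hws
    rw [Real.norm_eq_abs] at hb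
    have h1 : qf M u = ‖u‖^2 * qf M w := by
      conv_lhs => rw [huw]
      rw [qf_smul]
    rw [h1, abs_mul, abs_of_nonneg (by positivity : (0:ℝ) ≤ ‖u‖^2)]
    calc ‖u‖^2 * |qf M w| ≤ ‖u‖^2 * C :=
          mul_le_mul_of_nonneg_left hb (by positivity)
      _ = C * ‖u‖^2 := by ring

lemma qf_posdef_bound {n : ℕ} (hn : 1 ≤ n) {W : Matrix (Fin n) (Fin n) ℂ} (hW : W.PosDef) :
    ∃ m : ℝ, 0 < m ∧ ∀ u : Fin n → ℂ, m * ‖u‖^2 ≤ qf W u := by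
  have : Nontrivial (Fin n → ℂ) := by
    have : NeZero n := ⟨by omega⟩
    infer_instance
  have hcomp : IsCompact (Metric.sphere (0 : Fin n → ℂ) 1) := isCompact_sphere 0 1
  have hne : (Metric.sphere (0 : Fin n → ℂ) 1).Nonempty :=
    NormedSpace.sphere_nonempty.mpr (by norm_num)
  obtain ⟨w₀, hw₀s, hw₀min⟩ := hcomp.exists_isMinOn hne ((qf_cont W).continuousOn)
  have hw₀ne : w₀ ≠ 0 := by
    intro h; rw [h] at hw₀s; simp at hw₀s
  refine ⟨qf W w₀, hW.re_dotProduct_pos hw₀ne, fun u => ?_⟩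
  rcases eq_or_ne u 0 with rfl | hu
  · simp [qf]
  · have hnu : ‖u‖ ≠ 0 := norm_ne_zero_iff.mpr hu
    set w : Fin n → ℂ := ((‖u‖⁻¹ : ℝ) : ℂ) • u with hw
    have hws : w ∈ Metric.sphere (0 : Fin n → ℂ) 1 := by
      simp [hw, norm_smul, inv_mul_cancel₀ hnu]
    have huw : u = ((‖u‖ : ℝ) : ℂ) • w := by
      rw [hw, smul_smul, ← Complex.ofReal_mul, mul_inv_cancel₀ hnu]
      simp
    have h1 : qf W u = ‖u‖^2 * qf W w := by
      conv_lhs => rw [huw]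
      rw [qf_smul]
    have h2 := hw₀min hws
    simp only [IsMinOn, IsMinFilter] at h2
    have h3 : qf W w₀ ≤ qf W w := h2
    nlinarith [h1, h3, sq_nonneg ‖u‖]

lemma qf_add_rank_one {n : ℕ} (W : Matrix (Fin n) (Fin n) ℂ) (v : Fin n → ℂ) (c : ℝ)
    (u : Fin n → ℂ) :
    qf (W + c • vecMulVec v (star v)) u = qf W u + c * Complex.normSq (star v ⬝ᵥ u) := by
  have hmv : vecMulVec v (star v) *ᵥ u = (star v ⬝ᵥ u) • v := by
    ext i
    simp [vecMulVec_apply, mulVec, dotProduct, Finset.mul_sum]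
    rw [Finset.sum_mul]
    exact Finset.sum_congr rfl (fun j _ => by ring)
  unfold qf
  rw [add_mulVec, dotProduct_add, smul_mulVec, dotProduct_smul, hmv, dotProduct_smul]
  have hsv : star u ⬝ᵥ v = star (star v ⬝ᵥ u) := by
    simp [dotProduct, Finset.sum_congr]
    apply Finset.sum_congr rfl
    intro j _
    ring
  rw [hsv]
  simp only [Complex.add_re, Complex.real_smul, Complex.mul_re, Complex.ofReal_re,
    Complex.ofReal_im, Complex.normSq_apply, RingHom.coe_coe, Complex.star_def,
    Complex.conj_re, Complex.conj_im, smul_eq_mul]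
  ring

lemma rayleigh_eq_qf {n : ℕ} (A W : Matrix (Fin n) (Fin n) ℂ) (u : Fin n → ℂ) :
    rayleigh A W u = qf A u / qf W u := rfl

lemma rayleigh_abs_le {n : ℕ} {A W : Matrix (Fin n) (Fin n) ℂ} {C m : ℝ} (hm : 0 < m)
    (hnum : ∀ u : Fin n → ℂ, |qf A u| ≤ C * ‖u‖^2)
    (hden : ∀ u : Fin n → ℂ, m * ‖u‖^2 ≤ qf W u)
    {u : Fin n → ℂ} (hu : u ≠ 0) : |rayleigh A W u| ≤ C / m := by
  have hs : (0:ℝ) < ‖u‖^2 := pow_pos (norm_pos_iff.mpr hu) 2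
  have hd : 0 < qf W u := lt_of_lt_of_le (mul_pos hm hs) (hden u)
  rw [rayleigh_eq_qf, abs_div, abs_of_pos hd, div_le_div_iff₀ hd hm]
  nlinarith [hnum u, hden u, abs_nonneg (qf A u)]

lemma exists_subspace_le {M : Type*} [AddCommGroup M] [Module ℂ M] [FiniteDimensional ℂ M]
    (V : Submodule ℂ M) (j : ℕ)
    (hj : j ≤ Module.finrank ℂ V) :
    ∃ F : Submodule ℂ M, F ≤ V ∧ Module.finrank ℂ F = j := by
  let b := Module.finBasis ℂ V
  let f : Fin j → M := fun i => (b (Fin.castLE hj i) : M)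
  have hli : LinearIndependent ℂ f := by
    have h1 : LinearIndependent ℂ fun i => ((b i : V) : M) :=
      b.linearIndependent.map' V.subtype V.ker_subtype
    exact h1.comp (Fin.castLE hj) (Fin.castLE_injective hj)
  refine ⟨Submodule.span ℂ (Set.range f), ?_, ?_⟩
  · rw [Submodule.span_le]
    rintro x ⟨i, rfl⟩
    exact (b (Fin.castLE hj i)).2
  · rw [finrank_span_eq_card hli, Fintype.card_fin]

lemma exists_ne_zero_mem {n : ℕ} {V : Submodule ℂ (Fin n → ℂ)} (h : 0 < Module.finrank ℂ V) :
    ∃ u : Fin n → ℂ, u ∈ V ∧ u ≠ 0 := by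
  have : Nontrivial V := Module.nontrivial_of_finrank_pos h
  obtain ⟨x, hx⟩ := exists_ne (0 : V)
  exact ⟨(x : Fin n → ℂ), x.2, fun h0 => hx (Subtype.ext h0)⟩

theorem rank_one_enlargement_pushes_down {n : ℕ} (hn : 1 ≤ n)
    (A W : Matrix (Fin n) (Fin n) ℂ) (hA : A.IsHermitian) (hW : W.PosDef)
    (v : Fin n → ℂ) (c : ℝ) (hc : 0 ≤ c)
    (W₀ : Matrix (Fin n) (Fin n) ℂ) (hW₀ : W₀ = W + c • vecMulVec v (star v)) :
    ∀ j : ℕ, 1 ≤ j → j ≤ n - 1 → relEig A W₀ j ≤ relEig A W (j + 1) := by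
  intro j hj1 hj2
  have hjn : j + 1 ≤ n := by omega
  obtain ⟨C, hC⟩ := qf_bound hn A
  obtain ⟨m, hm, hmW⟩ := qf_posdef_bound hn hW
  have hmW₀ : ∀ u : Fin n → ℂ, m * ‖u‖^2 ≤ qf W₀ u := by
    intro u
    rw [hW₀, qf_add_rank_one]
    have h0 : 0 ≤ c * Complex.normSq (star v ⬝ᵥ u) :=
      mul_nonneg hc (Complex.normSq_nonneg _)
    linarith [hmW u]
  set B := C / m with hB
  have hBW : ∀ u : Fin n → ℂ, u ≠ 0 → |rayleigh A W u| ≤ B :=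
    fun u hu => rayleigh_abs_le hm hC hmW hu
  have hBW₀ : ∀ u : Fin n → ℂ, u ≠ 0 → |rayleigh A W₀ u| ≤ B :=
    fun u hu => rayleigh_abs_le hm hC hmW₀ hu
  -- the linear functional u ↦ star v ⬝ᵥ u
  let φ : (Fin n → ℂ) →ₗ[ℂ] ℂ :=
    { toFun := fun u => star v ⬝ᵥ u
      map_add' := fun x y => dotProduct_add _ _ _
      map_smul' := fun a x => by simp [dotProduct_smul] }
  -- rayleigh agreement on ker φ
  have hray : ∀ u : Fin n → ℂ, star v ⬝ᵥ u = 0 → rayleigh A W₀ u = rayleigh A W u := by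
    intro u hu
    rw [rayleigh_eq_qf, rayleigh_eq_qf, hW₀, qf_add_rank_one, hu]
    simp
  -- the defining sets
  set S₀ := { r : ℝ | ∃ F : Submodule ℂ (Fin n → ℂ), Module.finrank ℂ F = j ∧
      r = sSup { s : ℝ | ∃ u : Fin n → ℂ, u ∈ F ∧ u ≠ 0 ∧ s = rayleigh A W₀ u } } with hS₀
  have hS₀bdd : BddBelow S₀ := by
    refine ⟨-B, fun r hr => ?_⟩
    obtain ⟨G, hGrk, rfl⟩ := hr
    obtain ⟨u₀, hu₀G, hu₀⟩ := exists_ne_zero_mem (V := G) (by omega)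
    have hTbdd : BddAbove { s : ℝ | ∃ u : Fin n → ℂ, u ∈ G ∧ u ≠ 0 ∧ s = rayleigh A W₀ u } := by
      refine ⟨B, fun s hs => ?_⟩
      obtain ⟨u, _, hu, rfl⟩ := hs
      exact le_of_abs_le (hBW₀ u hu)
    have hmem : rayleigh A W₀ u₀ ∈
        { s : ℝ | ∃ u : Fin n → ℂ, u ∈ G ∧ u ≠ 0 ∧ s = rayleigh A W₀ u } :=
      ⟨u₀, hu₀G, hu₀, rfl⟩
    have := le_csSup hTbdd hmem
    have hlb : -B ≤ rayleigh A W₀ u₀ := neg_le_of_abs_le (hBW₀ u₀ hu₀)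
    linarith
  rw [relEig]
  apply le_csInf
  · obtain ⟨F, _, hFrk⟩ := exists_subspace_le (⊤ : Submodule ℂ (Fin n → ℂ)) (j+1)
      (by rw [finrank_top]; simpa using hjn)
    exact ⟨_, F, hFrk, rfl⟩
  · rintro r ⟨F, hFrk, rfl⟩
    -- cut F with the kernel of φ restricted to F
    set ψ := φ.comp F.subtype with hψ
    have hker : j ≤ Module.finrank ℂ (LinearMap.ker ψ) := by
      have h1 := LinearMap.finrank_range_add_finrank_ker ψ
      have h2 : Module.finrank ℂ (LinearMap.range ψ) ≤ 1 := by
        simpa using Submodule.finrank_le (LinearMap.range ψ)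
      rw [hFrk] at h1
      omega
    obtain ⟨K, hKle, hKrk⟩ := exists_subspace_le (LinearMap.ker ψ) j hker
    set F'' : Submodule ℂ (Fin n → ℂ) := K.map F.subtype with hF''
    have hF''rk : Module.finrank ℂ F'' = j := by
      rw [hF'', Submodule.finrank_map_subtype_eq, hKrk]
    have hF''sub : ∀ u : Fin n → ℂ, u ∈ F'' → u ∈ F ∧ star v ⬝ᵥ u = 0 := by
      rintro u ⟨x, hxK, rfl⟩
      refine ⟨x.2, ?_⟩
      have := hKle hxK
      rw [LinearMap.mem_ker] at this
      exact this
    -- F'' gives an element of S₀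
    set T'' := { s : ℝ | ∃ u : Fin n → ℂ, u ∈ F'' ∧ u ≠ 0 ∧ s = rayleigh A W₀ u } with hT''
    set T := { s : ℝ | ∃ u : Fin n → ℂ, u ∈ F ∧ u ≠ 0 ∧ s = rayleigh A W u } with hT
    have hmemS₀ : sSup T'' ∈ S₀ := ⟨F'', hF''rk, rfl⟩
    have step1 : relEig A W₀ j ≤ sSup T'' := csInf_le hS₀bdd hmemS₀
    have hTbdd : BddAbove T := by
      refine ⟨B, fun s hs => ?_⟩
      obtain ⟨u, _, hu, rfl⟩ := hs
      exact le_of_abs_le (hBW u hu)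
    have hT''ne : T''.Nonempty := by
      obtain ⟨u₀, hu₀F, hu₀⟩ := exists_ne_zero_mem (V := F'') (by omega)
      exact ⟨rayleigh A W₀ u₀, u₀, hu₀F, hu₀, rfl⟩
    have hsubset : T'' ⊆ T := by
      rintro s ⟨u, huF'', hu, rfl⟩
      obtain ⟨huF, hvu⟩ := hF''sub u huF''
      exact ⟨u, huF, hu, hray u hvu⟩
    have step2 : sSup T'' ≤ sSup T := csSup_le_csSup hTbdd hT''ne hsubset
    exact step1.trans step2
end

section
/- Let $n \ge 3$, let $W$ be a positive definite Hermitian $n\times n$ matrix over $\mathbb{C}$, let $v \in \mathbb{C}^n$, let $c > 0$, and set $W_0 = W + c\,vv^*$. Let $A$ be an $n\times n$ Hermitian matrix whose eigenvalues relative to $W$ satisfy $\gamma_3(A;W) \le -2n+3$ and $\gamma_n(A;W) \le 1$. Let $\varepsilon \ge 0$ and let $c' \ge 0$ satisfy $c'\,vv^* \le c\,W_0$ (as Hermitian forms). Denote by $\Gamma_1 \le \dots \le \Gamma_n$ the eigenvalues of $\varepsilon c\,A + \varepsilon c'\,vv^*$ relative to $W_0$. Then $\Gamma_2 + \Gamma_3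 + \dots + \Gamma_n \le -\varepsilon c$. -/
open Matrix
open scoped ComplexOrder

/-! ### Auxiliary quadratic-form machinery -/

/-- The real part of the quadratic form of `M` at `u`. -/
noncomputable def quadQ {n : ℕ} (M : Matrix (Fin n) (Fin n) ℂ) (u : Fin n → ℂ) : ℝ :=
  ((star u) ⬝ᵥ (M *ᵥ u)).re

lemma rayleigh_eq {n : ℕ} (A W : Matrix (Fin n) (Fin n) ℂ) (u : Fin n → ℂ) :
    rayleigh A W u = quadQ A u / quadQ W u := rfl

lemma quadQ_add {n : ℕ} (P Q : Matrix (Fin n) (Fin n) ℂ) (u : Fin n → ℂ) :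
    quadQ (P + Q) u = quadQ P u + quadQ Q u := by
  simp [quadQ, add_mulVec, dotProduct_add]

lemma quadQ_smul {n : ℕ} (a : ℝ) (P : Matrix (Fin n) (Fin n) ℂ) (u : Fin n → ℂ) :
    quadQ (a • P) u = a * quadQ P u := by
  simp [quadQ, smul_mulVec, dotProduct_smul, Complex.smul_re]

lemma vecMulVec_dot {n : ℕ} (v u : Fin n → ℂ) :
    (star u) ⬝ᵥ ((vecMulVec v (star v)) *ᵥ u) = ((Complex.normSq ((star v) ⬝ᵥ u) : ℝ) : ℂ) := by
  have h : (vecMulVec v (star v)) *ᵥ u = ((star v) ⬝ᵥ u) • v := by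
    funext i
    simp only [vecMulVec_apply, mulVec, dotProduct, Pi.smul_apply, smul_eq_mul,
      Finset.sum_mul, Finset.mul_sum, Pi.star_apply]
    exact Finset.sum_congr rfl fun j _ => by ring
  have h2 : star u ⬝ᵥ v = star ((star v) ⬝ᵥ u) := by rw [star_dotProduct]
  rw [h, dotProduct_smul, smul_eq_mul, h2]
  have := Complex.mul_conj ((star v) ⬝ᵥ u)
  rw [show (star ((star v) ⬝ᵥ u)) = (starRingEnd ℂ) ((star v) ⬝ᵥ u) from rfl, this]

lemma quadQ_vecMulVec {n : ℕ} (v u : Fin n → ℂ) :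
    quadQ (vecMulVec v (star v)) u = Complex.normSq ((star v) ⬝ᵥ u) := by
  rw [quadQ, vecMulVec_dot]
  simp

lemma quadQ_continuous {n : ℕ} (M : Matrix (Fin n) (Fin n) ℂ) : Continuous (quadQ M) := by
  have : Continuous fun u : Fin n → ℂ => (star u) ⬝ᵥ (M *ᵥ u) := by
    simp only [dotProduct, mulVec, Pi.star_apply]
    apply continuous_finset_sum
    intro i _
    exact ((continuous_apply i).star).mul
      (continuous_finset_sum _ fun j _ => continuous_const.mul (continuous_apply j))
  exact Complex.continuous_re.comp this

lemma quadQ_smul_real {n : ℕ} (M : Matrix (Fin n) (Fin n) ℂ) (r : ℝ) (u : Fin n → ℂ) :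
    quadQ M ((r : ℂ) • u) = r ^ 2 * quadQ M u := by
  simp only [quadQ, mulVec_smul, star_smul, smul_dotProduct, dotProduct_smul]
  rw [Complex.star_def, Complex.conj_ofReal]
  have : ((r : ℂ) • ((r : ℂ) • ((star u) ⬝ᵥ (M *ᵥ u)))) =
      ((r ^ 2 : ℝ) : ℂ) * ((star u) ⬝ᵥ (M *ᵥ u)) := by
    simp only [smul_eq_mul]; push_cast; ring
  rw [this, Complex.re_ofReal_mul]

lemma rayleigh_smul_real {n : ℕ} (A W : Matrix (Fin n) (Fin n) ℂ) (r : ℝ) (hr : r ≠ 0)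
    (u : Fin n → ℂ) : rayleigh A W ((r : ℂ) • u) = rayleigh A W u := by
  rw [rayleigh_eq, rayleigh_eq, quadQ_smul_real, quadQ_smul_real,
    mul_div_mul_left _ _ (pow_ne_zero 2 hr)]

lemma quadQ_posdef {n : ℕ} {W : Matrix (Fin n) (Fin n) ℂ} (hW : W.PosDef) {u : Fin n → ℂ}
    (hu : u ≠ 0) : 0 < quadQ W u := by
  simpa [quadQ] using hW.re_dotProduct_pos hu

lemma quadQ_psd {n : ℕ} {W : Matrix (Fin n) (Fin n) ℂ} (hW : W.PosSemidef) (u : Fin n → ℂ) :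
    0 ≤ quadQ W u := by
  simpa [quadQ] using hW.re_dotProduct_nonneg u

lemma rayleigh_bounds {n : ℕ} (B W : Matrix (Fin n) (Fin n) ℂ) (hn : 0 < n) (hW : W.PosDef) :
    ∃ m M : ℝ, ∀ u : Fin n → ℂ, u ≠ 0 → m ≤ rayleigh B W u ∧ rayleigh B W u ≤ M := by
  haveI : Nonempty (Fin n) := Fin.pos_iff_nonempty.mp hn
  have hcomp : IsCompact (Metric.sphere (0 : Fin n → ℂ) 1) := isCompact_sphere 0 1
  have hne : (Metric.sphere (0 : Fin n → ℂ) 1).Nonempty := by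
    refine ⟨fun _ => 1, ?_⟩
    simp [Metric.mem_sphere, dist_eq_norm]
  have hcont : ContinuousOn (rayleigh B W) (Metric.sphere (0 : Fin n → ℂ) 1) := by
    apply ContinuousOn.div (quadQ_continuous B).continuousOn (quadQ_continuous W).continuousOn
    intro u hu
    have : u ≠ 0 := by
      intro h
      simp [h, Metric.mem_sphere, dist_eq_norm] at hu
    exact ne_of_gt (quadQ_posdef hW this)
  obtain ⟨xM, _, hxM⟩ := hcomp.exists_isMaxOn hne hcont
  obtain ⟨xm, _, hxm⟩ := hcomp.exists_isMinOn hne hcont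
  refine ⟨rayleigh B W xm, rayleigh B W xM, fun u hu => ?_⟩
  have hnu : ‖u‖ ≠ 0 := norm_ne_zero_iff.mpr hu
  have hmem : ((‖u‖⁻¹ : ℝ) : ℂ) • u ∈ Metric.sphere (0 : Fin n → ℂ) 1 := by
    simp [Metric.mem_sphere, dist_eq_norm, norm_smul,
      abs_of_nonneg (inv_nonneg.mpr (norm_nonneg u)), inv_mul_cancel₀ hnu]
  have heq := rayleigh_smul_real B W ‖u‖⁻¹ (inv_ne_zero hnu) u
  exact ⟨heq ▸ hxm hmem, heq ▸ hxM hmem⟩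

lemma exists_submodule_le_finrank {n : ℕ} (G : Submodule ℂ (Fin n → ℂ)) (j : ℕ)
    (hj : j ≤ Module.finrank ℂ G) : ∃ F : Submodule ℂ (Fin n → ℂ),
      F ≤ G ∧ Module.finrank ℂ F = j := by
  obtain ⟨f, hf⟩ := exists_linearIndependent_of_le_finrank hj
  have hg : LinearIndependent ℂ (G.subtype ∘ f) :=
    hf.map' G.subtype (Submodule.ker_subtype G)
  refine ⟨Submodule.span ℂ (Set.range (G.subtype ∘ f)), ?_, ?_⟩
  · rw [Submodule.span_le]
    rintro x ⟨i, rfl⟩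
    exact (f i).2
  · rw [finrank_span_eq_card hg, Fintype.card_fin]

lemma exists_mem_ne_zero_of_finrank_pos' {n : ℕ} {F : Submodule ℂ (Fin n → ℂ)}
    (h : 0 < Module.finrank ℂ F) : ∃ u : Fin n → ℂ, u ∈ F ∧ u ≠ 0 := by
  obtain ⟨⟨u, hu⟩, hne⟩ := Module.finrank_pos_iff_exists_ne_zero.mp h
  exact ⟨u, hu, fun h0 => hne (by simp [Subtype.ext_iff, h0])⟩

lemma relEig_le_of_subspace {n : ℕ} (B W : Matrix (Fin n) (Fin n) ℂ) (hn : 0 < n)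
    (hW : W.PosDef) {j : ℕ} (hj : 0 < j)
    (F : Submodule ℂ (Fin n → ℂ)) (hF : Module.finrank ℂ F = j) {r : ℝ}
    (h : ∀ u ∈ F, u ≠ 0 → rayleigh B W u ≤ r) : relEig B W j ≤ r := by
  obtain ⟨m, M, hmM⟩ := rayleigh_bounds B W hn hW
  have hbdd : BddBelow { r : ℝ | ∃ F : Submodule ℂ (Fin n → ℂ), Module.finrank ℂ F = j ∧
      r = sSup { s : ℝ | ∃ u : Fin n → ℂ, u ∈ F ∧ u ≠ 0 ∧ s = rayleigh B W u } } := by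
    refine ⟨m, ?_⟩
    rintro r ⟨F', hF', rfl⟩
    obtain ⟨u, huF, hu⟩ := exists_mem_ne_zero_of_finrank_pos' (F := F') (hF' ▸ hj)
    have hmem : rayleigh B W u ∈
        { s : ℝ | ∃ u : Fin n → ℂ, u ∈ F' ∧ u ≠ 0 ∧ s = rayleigh B W u } := ⟨u, huF, hu, rfl⟩
    have hub : BddAbove { s : ℝ | ∃ u : Fin n → ℂ, u ∈ F' ∧ u ≠ 0 ∧ s = rayleigh B W u } := by
      refine ⟨M, ?_⟩
      rintro s ⟨w, _, hw, rfl⟩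
      exact (hmM w hw).2
    exact le_trans (hmM u hu).1 (le_csSup hub hmem)
  refine csInf_le_of_le hbdd ⟨F, hF, rfl⟩ ?_
  apply csSup_le
  · obtain ⟨u, huF, hu⟩ := exists_mem_ne_zero_of_finrank_pos' (F := F) (hF ▸ hj)
    exact ⟨rayleigh B W u, u, huF, hu, rfl⟩
  · rintro s ⟨w, hwF, hw, rfl⟩
    exact h w hwF hw

lemma exists_subspace_rayleigh_le {n : ℕ} (B W : Matrix (Fin n) (Fin n) ℂ) (hn : 0 < n)
    (hW : W.PosDef) {j : ℕ} (hj : 0 < j) (hjn : j ≤ n) {η : ℝ} (hη : 0 < η) :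
    ∃ F : Submodule ℂ (Fin n → ℂ), Module.finrank ℂ F = j ∧
      ∀ u ∈ F, u ≠ 0 → rayleigh B W u ≤ relEig B W j + η := by
  obtain ⟨m, M, hmM⟩ := rayleigh_bounds B W hn hW
  set S := { r : ℝ | ∃ F : Submodule ℂ (Fin n → ℂ), Module.finrank ℂ F = j ∧
      r = sSup { s : ℝ | ∃ u : Fin n → ℂ, u ∈ F ∧ u ≠ 0 ∧ s = rayleigh B W u } } with hS
  have hSne : S.Nonempty := by
    obtain ⟨F, _, hF⟩ := exists_submodule_le_finrank (⊤ : Submodule ℂ (Fin n → ℂ)) j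
      (by rw [finrank_top]; simpa [Module.finrank_pi] using hjn)
    exact ⟨_, F, hF, rfl⟩
  have hlt : sInf S < relEig B W j + η := lt_add_of_pos_right _ hη
  obtain ⟨r, hrS, hr⟩ := exists_lt_of_csInf_lt hSne hlt
  obtain ⟨F, hF, rfl⟩ := hrS
  refine ⟨F, hF, fun u huF hu => ?_⟩
  have hub : BddAbove { s : ℝ | ∃ u : Fin n → ℂ, u ∈ F ∧ u ≠ 0 ∧ s = rayleigh B W u } := by
    refine ⟨M, ?_⟩
    rintro s ⟨w, _, hw, rfl⟩
    exact (hmM w hw).2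
  exact le_trans (le_csSup hub ⟨u, huF, hu, rfl⟩) hr.le

set_option maxHeartbeats 2000000 in
/-- The pointwise linear-algebra content of relation (2.8) of the paper: the sum of all
eigenvalues of `εc·A + εc'·vv*` relative to `W₀ = W + c·vv*`, except the smallest,
is at most `-εc`. -/
theorem sum_of_upper_relative_eigenvalues_le {n : ℕ} (hn : 3 ≤ n)
    (W : Matrix (Fin n) (Fin n) ℂ) (hW : W.PosDef)
    (v : Fin n → ℂ) (c : ℝ) (hc : 0 < c)
    (W₀ : Matrix (Fin n) (Fin n) ℂ) (hW₀ : W₀ = W + c • vecMulVec v (star v))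
    (A : Matrix (Fin n) (Fin n) ℂ) (hA : A.IsHermitian)
    (h3 : relEig A W 3 ≤ -2 * (n : ℝ) + 3) (hN : relEig A W n ≤ 1)
    (ε : ℝ) (hε : 0 ≤ ε) (c' : ℝ) (hc' : 0 ≤ c')
    (hcc' : (c • W₀ - c' • vecMulVec v (star v)).PosSemidef) :
    ∑ j ∈ Finset.Icc 2 n,
        relEig ((ε * c) • A + (ε * c') • vecMulVec v (star v)) W₀ j ≤ -(ε * c) := by
  obtain ⟨m, rfl⟩ : ∃ m, n = m + 3 := ⟨n - 3, by omega⟩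
  set VV := vecMulVec v (star v) with hVVdef
  set B := (ε * c) • A + (ε * c') • VV with hBdef
  have hn0 : 0 < m + 3 := by omega
  -- positivity of W₀
  have hVVherm : VV.IsHermitian := by
    apply Matrix.ext
    intro i j
    simp [hVVdef, conjTranspose_apply, vecMulVec_apply, mul_comm]
  have hcVVpsd : ((c : ℝ) • VV).PosSemidef := by
    refine posSemidef_iff_dotProduct_mulVec.mpr ⟨?_, ?_⟩
    · show ((c : ℝ) • VV)ᴴ = (c : ℝ) • VV
      rw [conjTranspose_smul, hVVherm]
      norm_num
    · intro x
      rw [smul_mulVec, dotProduct_smul, hVVdef, vecMulVec_dot]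
      have : (c : ℝ) • ((Complex.normSq ((star v) ⬝ᵥ x) : ℝ) : ℂ) =
          ((c * Complex.normSq ((star v) ⬝ᵥ x) : ℝ) : ℂ) := by
        push_cast
        simp [smul_eq_mul]
      rw [this]
      exact Complex.zero_le_real.mpr (mul_nonneg hc.le (Complex.normSq_nonneg _))
  have hW₀pos : W₀.PosDef := hW₀ ▸ hW.add_posSemidef hcVVpsd
  -- quadratic form identities
  have hquadW₀ : ∀ u, quadQ W₀ u = quadQ W u + c * Complex.normSq ((star v) ⬝ᵥ u) := by
    intro u
    rw [hW₀, quadQ_add, quadQ_smul, quadQ_vecMulVec]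
  have hquadB : ∀ u, quadQ B u
      = (ε * c) * quadQ A u + (ε * c') * Complex.normSq ((star v) ⬝ᵥ u) := by
    intro u
    rw [hBdef, quadQ_add, quadQ_smul, quadQ_smul, quadQ_vecMulVec]
  have hvcb : ∀ u, c' * Complex.normSq ((star v) ⬝ᵥ u) ≤ c * quadQ W₀ u := by
    intro u
    have h0 := quadQ_psd hcc' u
    have heq : quadQ (c • W₀ - c' • VV) u
        = c * quadQ W₀ u - c' * Complex.normSq ((star v) ⬝ᵥ u) := by
      rw [sub_eq_add_neg, ← neg_smul, quadQ_add, quadQ_smul, quadQ_smul, quadQ_vecMulVec]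
      ring
    rw [heq] at h0
    linarith
  have hεc : 0 ≤ ε * c := mul_nonneg hε hc.le
  -- Rayleigh on the orthogonal complement of v
  have hker : ∀ u : Fin (m + 3) → ℂ, (star v) ⬝ᵥ u = 0 →
      rayleigh B W₀ u = (ε * c) * rayleigh A W u := by
    intro u h0
    have e1 : quadQ B u = (ε * c) * quadQ A u := by rw [hquadB, h0]; simp
    have e2 : quadQ W₀ u = quadQ W u := by rw [hquadW₀, h0]; simp
    rw [rayleigh_eq, rayleigh_eq, e1, e2, mul_div_assoc]
  -- the hyperplane v^⊥
  set φ : (Fin (m + 3) → ℂ) →ₗ[ℂ] ℂ :=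
    { toFun := fun u => (star v) ⬝ᵥ u
      map_add' := fun x y => dotProduct_add _ _ _
      map_smul' := fun a x => by simp }
  have hφ : ∀ u, u ∈ LinearMap.ker φ ↔ (star v) ⬝ᵥ u = 0 := fun u => Iff.rfl
  have hpi : Module.finrank ℂ (Fin (m + 3) → ℂ) = m + 3 := by
    simp [Module.finrank_pi]
  have hKrank : m + 2 ≤ Module.finrank ℂ (LinearMap.ker φ) := by
    have h1 := LinearMap.finrank_range_add_finrank_ker φ
    have h2 : Module.finrank ℂ (LinearMap.range φ) ≤ 1 :=
      le_of_le_of_eq (Submodule.finrank_le _) (Module.finrank_self ℂ)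
    omega
  -- limiting argument
  rw [show -(ε * c) = -(ε * c) + 0 from (add_zero _).symm]
  apply le_of_forall_pos_le_add
  intro δ hδ
  obtain ⟨η, hηpos, hηle⟩ : ∃ η : ℝ, 0 < η ∧ (ε * c) * ((m : ℝ) + 2) * η ≤ δ := by
    have h1 : (0:ℝ) < (ε * c) * ((m : ℝ) + 2) + 1 := by positivity
    refine ⟨δ / ((ε * c) * ((m : ℝ) + 2) + 1), div_pos hδ h1, ?_⟩
    rw [mul_div_assoc', div_le_iff₀ h1]
    nlinarith
  -- extract near-optimal subspaces for A relative to W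
  obtain ⟨F3, hF3rank, hF3⟩ := exists_subspace_rayleigh_le A W hn0 hW
    (j := 3) (by omega) (by omega) hηpos
  obtain ⟨Fn, hFnrank, hFn⟩ := exists_subspace_rayleigh_le A W hn0 hW
    (j := m + 3) (by omega) le_rfl hηpos
  have hFn_top : Fn = ⊤ := Submodule.eq_top_of_finrank_eq (by rw [hFnrank, hpi])
  have hAll : ∀ u : Fin (m + 3) → ℂ, u ≠ 0 →
      rayleigh A W u ≤ relEig A W (m + 3) + η := fun u hu =>
    hFn u (hFn_top ▸ Submodule.mem_top) hu
  -- the three eigenvalue bounds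
  have claim2 : relEig B W₀ 2 ≤ (ε * c) * (relEig A W 3 + η) := by
    have hGrank : 2 ≤ Module.finrank ℂ ↥(F3 ⊓ LinearMap.ker φ) := by
      have h1 := Submodule.finrank_sup_add_finrank_inf_eq F3 (LinearMap.ker φ)
      have h2 : Module.finrank ℂ ↥(F3 ⊔ LinearMap.ker φ) ≤ m + 3 :=
        le_of_le_of_eq (Submodule.finrank_le _) hpi
      omega
    obtain ⟨F, hFG, hFrank⟩ := exists_submodule_le_finrank _ 2 hGrank
    apply relEig_le_of_subspace B W₀ hn0 hW₀pos (by omega) F hFrank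
    intro u huF hu
    rw [hker u ((hφ u).mp (hFG huF).2)]
    exact mul_le_mul_of_nonneg_left (hF3 u (hFG huF).1 hu) hεc
  have claimMid : ∀ j ∈ Finset.Icc 3 (m + 2),
      relEig B W₀ j ≤ (ε * c) * (relEig A W (m + 3) + η) := by
    intro j hj
    rw [Finset.mem_Icc] at hj
    obtain ⟨F, hFK, hFrank⟩ := exists_submodule_le_finrank (LinearMap.ker φ) j
      (le_trans hj.2 hKrank)
    apply relEig_le_of_subspace B W₀ hn0 hW₀pos (by omega) F hFrank
    intro u huF hu
    rw [hker u ((hφ u).mp (hFK huF))]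
    exact mul_le_mul_of_nonneg_left (hAll u hu) hεc
  have claimTop : relEig B W₀ (m + 3) ≤ (ε * c) * (2 + η) := by
    apply relEig_le_of_subspace B W₀ hn0 hW₀pos (by omega) ⊤ (by rw [finrank_top, hpi])
    intro u _ hu
    have hWu : 0 < quadQ W u := quadQ_posdef hW hu
    have hW₀u : 0 < quadQ W₀ u := quadQ_posdef hW₀pos hu
    have hNn : 0 ≤ Complex.normSq ((star v) ⬝ᵥ u) := Complex.normSq_nonneg _
    have hWle : quadQ W u ≤ quadQ W₀ u := by rw [hquadW₀ u]; nlinarith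
    have hA1 : (ε * c) * quadQ A u ≤ (ε * c) * ((1 + η) * quadQ W₀ u) := by
      rcases le_or_gt (quadQ A u) 0 with h | h
      · have t1 : (ε * c) * quadQ A u ≤ 0 := mul_nonpos_of_nonneg_of_nonpos hεc h
        have t2 : 0 ≤ (ε * c) * ((1 + η) * quadQ W₀ u) :=
          mul_nonneg hεc (mul_nonneg (by linarith) hW₀u.le)
        linarith
      · have hr : quadQ A u / quadQ W u ≤ relEig A W (m + 3) + η := hAll u hu
        have hle : quadQ A u ≤ (relEig A W (m + 3) + η) * quadQ W u := (div_le_iff₀ hWu).mp hr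
        have s1 : quadQ A u ≤ (1 + η) * quadQ W u := by nlinarith
        have s2 : (1 + η) * quadQ W u ≤ (1 + η) * quadQ W₀ u := by nlinarith
        exact mul_le_mul_of_nonneg_left (le_trans s1 s2) hεc
    have hA2 : (ε * c') * Complex.normSq ((star v) ⬝ᵥ u) ≤ (ε * c) * quadQ W₀ u := by
      have := mul_le_mul_of_nonneg_left (hvcb u) hε
      linarith [mul_assoc ε c' (Complex.normSq ((star v) ⬝ᵥ u)),
        mul_assoc ε c (quadQ W₀ u)]
    rw [rayleigh_eq, div_le_iff₀ hW₀u, hquadB]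
    linarith
  -- assemble the sum
  have hsplit : Finset.Icc 2 (m + 3) = insert 2 (Finset.Icc 3 (m + 3)) := by
    ext k
    simp only [Finset.mem_Icc, Finset.mem_insert]
    omega
  have hsplit2 : Finset.Icc 3 (m + 3) = insert (m + 3) (Finset.Icc 3 (m + 2)) := by
    ext k
    simp only [Finset.mem_Icc, Finset.mem_insert]
    omega
  rw [hsplit, Finset.sum_insert (by simp), hsplit2,
    Finset.sum_insert (by simp [Finset.mem_Icc])]
  have hsum : ∑ j ∈ Finset.Icc 3 (m + 2), relEig B W₀ j
      ≤ (m : ℝ) * ((ε * c) * (relEig A W (m + 3) + η)) := by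
    have h := Finset.sum_le_card_nsmul (Finset.Icc 3 (m + 2)) _
      ((ε * c) * (relEig A W (m + 3) + η)) claimMid
    rw [Nat.card_Icc] at h
    have hcard : m + 2 + 1 - 3 = m := by omega
    rw [hcard, nsmul_eq_mul] at h
    exact h
  have hc3 : relEig A W 3 + η ≤ -2 * ((m : ℝ) + 3) + 3 + η := by
    push_cast at h3
    linarith
  have hcN : relEig A W (m + 3) + η ≤ 1 + η := by linarith
  have e2 : relEig B W₀ 2 ≤ (ε * c) * (-2 * ((m : ℝ) + 3) + 3 + η) :=
    le_trans claim2 (mul_le_mul_of_nonneg_left hc3 hεc)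
  have emid : ∑ j ∈ Finset.Icc 3 (m + 2), relEig B W₀ j ≤ (m : ℝ) * ((ε * c) * (1 + η)) :=
    le_trans hsum (mul_le_mul_of_nonneg_left
      (mul_le_mul_of_nonneg_left hcN hεc) (Nat.cast_nonneg m))
  have hm0 : (0 : ℝ) ≤ (m : ℝ) := Nat.cast_nonneg m
  have hεcm : 0 ≤ (ε * c) * (m : ℝ) := mul_nonneg hεc hm0
  nlinarith [e2, emid, claimTop, hηle, hεc, hεcm, hηpos.le]
end
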